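/- Let e ∈ L²(S^{d-1}; ℂ^d) with ξ·e(ξ) = 0 a.e. and ‖e‖_{L²(S^{d-1})} = 1. Then the first component of the vector ∫_{|ξ|=1} e(ξ) dσ equals the L² inner product ∫_{|ξ|=1} e(ξ)·ℓ(ξ) dσ, where ℓ(ξ) = (1,0,…,0) − ξ₁ξ, and hence |∫_{|ξ|=1} e₁(ξ) dσ| ≤ (|S^{d-1}|·(d-1)/d)^{1/2}, with equality iff e is a unimodular scalar multiple of ℓ/‖ℓ‖. -/

import Mathlib

open MeasureTheory Metric Set Pointwise

/-- Surface measure on the unit sphere `S^{d-1} ⊂ ℝ^d`. -/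
noncomputable def sphereMeasure (d : ℕ) :
    Measure (sphere (0 : EuclideanSpace ℝ (Fin d)) 1) :=
  (volume : Measure (EuclideanSpace ℝ (Fin d))).toSphere

instance (d : ℕ) : IsFiniteMeasure (sphereMeasure d) := by
  unfold sphereMeasure; infer_instance

variable {d : ℕ}
abbrev ES (d : ℕ) : Type := EuclideanSpace ℝ (Fin d)

lemma sphere_map_mem (f : ES d ≃ₗᵢ[ℝ] ES d) (ξ : sphere (0 : ES d) 1) :
    f ξ ∈ sphere (0 : ES d) 1 := by
  have h1 : ‖(ξ : ES d)‖ = 1 := by simpa using mem_sphere_zero_iff_norm.mp ξ.2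
  simp [mem_sphere_zero_iff_norm, h1]

noncomputable def sphereMap (f : ES d ≃ₗᵢ[ℝ] ES d) :
    sphere (0 : ES d) 1 → sphere (0 : ES d) 1 :=
  fun ξ => ⟨f ξ, sphere_map_mem f ξ⟩

lemma sphereMap_continuous (f : ES d ≃ₗᵢ[ℝ] ES d) : Continuous (sphereMap f) :=
  Continuous.subtype_mk (f.continuous.comp continuous_subtype_val) _

lemma toSphere_map (f : ES d ≃ₗᵢ[ℝ] ES d) :
    Measure.map (sphereMap f) (sphereMeasure d) = sphereMeasure d := by
  have hFc := sphereMap_continuous f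
  refine Measure.ext fun s hs => ?_
  rw [Measure.map_apply hFc.measurable hs]
  unfold sphereMeasure
  rw [Measure.toSphere_apply' _ (hFc.measurable hs), Measure.toSphere_apply' _ hs]
  have himg : (Subtype.val '' (sphereMap f ⁻¹' s)) = f ⁻¹' (Subtype.val '' s) := by
    ext x
    constructor
    · rintro ⟨ξ, hξ, rfl⟩
      exact ⟨sphereMap f ξ, hξ, rfl⟩
    · rintro ⟨η, hη, hfx⟩
      have hx : x ∈ sphere (0 : ES d) 1 := by
        have h1 : ‖(η : ES d)‖ = 1 := by simpa using mem_sphere_zero_iff_norm.mp η.2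
        have h2 : ‖f x‖ = 1 := by rw [← hfx]; exact h1
        simpa [mem_sphere_zero_iff_norm] using h2
      refine ⟨⟨x, hx⟩, ?_, rfl⟩
      have h3 : sphereMap f ⟨x, hx⟩ = η := Subtype.ext (by simp [sphereMap, hfx])
      show sphereMap f ⟨x, hx⟩ ∈ s
      rw [h3]; exact hη
  rw [himg]
  have hsmul : Ioo (0:ℝ) 1 • (f ⁻¹' (Subtype.val '' s))
      = f ⁻¹' (Ioo (0:ℝ) 1 • (Subtype.val '' s)) := by
    ext y
    simp only [Set.mem_smul, Set.mem_preimage]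
    constructor
    · rintro ⟨r, hr, a, ha, rfl⟩
      exact ⟨r, hr, f a, ha, by simp⟩
    · rintro ⟨r, hr, b, hb, hby⟩
      refine ⟨r, hr, f.symm b, by simpa using hb, ?_⟩
      apply f.injective
      simp [← hby, f.map_smul]
  rw [hsmul,
    (f.measurePreserving).measure_preimage_emb f.toHomeomorph.measurableEmbedding]

lemma coord_continuous (i : Fin d) :
    Continuous fun ξ : sphere (0 : ES d) 1 => (ξ : ES d) i :=
  (EuclideanSpace.proj (𝕜 := ℝ) i).continuous.comp continuous_subtype_val

lemma cont_integrable {E : Type*} [NormedAddCommGroup E]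
    {f : sphere (0 : ES d) 1 → E} (hf : Continuous f) :
    Integrable f (sphereMeasure d) :=
  memLp_one_iff_integrable.mp
    (hf.memLp_of_hasCompactSupport (HasCompactSupport.of_compactSpace f))

lemma cont_memℒp {E : Type*} [NormedAddCommGroup E]
    {f : sphere (0 : ES d) 1 → E} (hf : Continuous f) :
    MemLp f 2 (sphereMeasure d) :=
  hf.memLp_of_hasCompactSupport (HasCompactSupport.of_compactSpace f)

lemma sum_coord_sq (ξ : sphere (0 : ES d) 1) : ∑ i, ((ξ : ES d) i) ^ 2 = 1 := by
  have h1 : ‖(ξ : ES d)‖ = 1 := by simpa using mem_sphere_zero_iff_norm.mp ξ.2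
  have h2 : (inner ℝ (ξ : ES d) (ξ : ES d) : ℝ) = 1 := by
    rw [real_inner_self_eq_norm_sq, h1]; norm_num
  rw [PiLp.inner_apply] at h2
  simpa [RCLike.inner_apply, sq] using h2

lemma integral_coord_sq (hd : 0 < d) (i : Fin d) :
    ∫ ξ, ((ξ : ES d) i) ^ 2 ∂(sphereMeasure d)
      = ((sphereMeasure d) Set.univ).toReal / d := by
  have key : ∀ i : Fin d, ∫ ξ, ((ξ : ES d) i) ^ 2 ∂(sphereMeasure d)
      = ∫ ξ, ((ξ : ES d) ⟨0, hd⟩) ^ 2 ∂(sphereMeasure d) := by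
    intro i
    set f : ES d ≃ₗᵢ[ℝ] ES d :=
      LinearIsometryEquiv.piLpCongrLeft 2 ℝ ℝ (Equiv.swap i (⟨0, hd⟩ : Fin d)) with hf
    have hmap := toSphere_map f
    have h0 : ∀ ξ : sphere (0 : ES d) 1, ((sphereMap f ξ : ES d)) ⟨0, hd⟩ = (ξ : ES d) i := by
      intro ξ
      show (f (ξ : ES d)) ⟨0, hd⟩ = _
      rw [hf, LinearIsometryEquiv.piLpCongrLeft_apply]
      simp only [Equiv.piCongrLeft', Equiv.coe_fn_mk, Equiv.symm_symm, Equiv.symm_swap,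
        Equiv.swap_apply_right]
    calc ∫ ξ, ((ξ : ES d) i) ^ 2 ∂(sphereMeasure d)
        = ∫ ξ, ((sphereMap f ξ : ES d) ⟨0, hd⟩) ^ 2 ∂(sphereMeasure d) := by
          refine integral_congr_ae (Filter.Eventually.of_forall fun ξ => ?_)
          dsimp only; rw [h0]
      _ = ∫ η, ((η : ES d) ⟨0, hd⟩) ^ 2 ∂(sphereMeasure d) := by
          nth_rewrite 2 [← hmap]
          rw [integral_map (sphereMap_continuous f).aemeasurable
            (by rw [hmap]; exact ((coord_continuous _).pow 2).aestronglyMeasurable)]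
  have hsum : ∑ j : Fin d, ∫ ξ, ((ξ : ES d) j) ^ 2 ∂(sphereMeasure d)
      = ((sphereMeasure d) Set.univ).toReal := by
    rw [← integral_finset_sum _ (fun j _ => cont_integrable (f := fun ξ : sphere (0 : ES d) 1 => ((ξ : ES d) j) ^ 2) ((coord_continuous j).pow 2))]
    simp_rw [sum_coord_sq]
    simp; rfl
  have hd' : (0:ℝ) < d := by exact_mod_cast hd
  rw [key i, eq_div_iff (ne_of_gt hd')]
  rw [← hsum]
  calc (∫ ξ, ((ξ : ES d) ⟨0, hd⟩) ^ 2 ∂(sphereMeasure d)) * d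
      = ∑ _j : Fin d, ∫ ξ, ((ξ : ES d) ⟨0, hd⟩) ^ 2 ∂(sphereMeasure d) := by
        rw [Finset.sum_const, Finset.card_univ, Fintype.card_fin, nsmul_eq_mul, mul_comm]
    _ = ∑ j : Fin d, ∫ ξ, ((ξ : ES d) j) ^ 2 ∂(sphereMeasure d) :=
        Finset.sum_congr rfl fun j _ => (key j).symm

set_option maxHeartbeats 1000000 in
/-- For tangential `e ∈ L²(S^{d-1};ℂ^d)` of unit `L²` norm, the first component of
`∫ e dσ` equals `∫ e·ℓ dσ` where `ℓ(ξ) = (1,0,…,0) − ξ₁ξ`; hence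
`|∫ e₁ dσ| ≤ (|S^{d-1}|(d-1)/d)^{1/2}`, with equality iff `e` is a unimodular scalar
multiple of `ℓ/‖ℓ‖`. -/
theorem stmt_19 (d : ℕ) (hd : 2 ≤ d)
    (ℓ : EuclideanSpace ℝ (Fin d) → EuclideanSpace ℝ (Fin d))
    (hℓ : ∀ ξ, ℓ ξ = EuclideanSpace.single (⟨0, by omega⟩ : Fin d) (1 : ℝ)
        - ξ (⟨0, by omega⟩ : Fin d) • ξ)
    (e : sphere (0 : EuclideanSpace ℝ (Fin d)) 1 → EuclideanSpace ℂ (Fin d))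
    (he : MemLp e 2 (sphereMeasure d))
    (htang : ∀ᵐ (ξ : sphere (0 : EuclideanSpace ℝ (Fin d)) 1) ∂(sphereMeasure d),
      ∑ j, ((ξ : EuclideanSpace ℝ (Fin d)) j : ℂ) * e ξ j = 0)
    (hnorm : ∫ ξ, ‖e ξ‖ ^ 2 ∂(sphereMeasure d) = 1) :
    (∫ ξ, e ξ ∂(sphereMeasure d)) (⟨0, by omega⟩ : Fin d) =
      ∫ ξ, ∑ j, e ξ j * ((ℓ (ξ : EuclideanSpace ℝ (Fin d)) j : ℝ) : ℂ)
        ∂(sphereMeasure d) ∧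
    ‖(∫ ξ, e ξ ∂(sphereMeasure d)) (⟨0, by omega⟩ : Fin d)‖ ≤
      Real.sqrt ((sphereMeasure d Set.univ).toReal * ((d - 1 : ℝ) / d)) ∧
    (‖(∫ ξ, e ξ ∂(sphereMeasure d)) (⟨0, by omega⟩ : Fin d)‖ =
        Real.sqrt ((sphereMeasure d Set.univ).toReal * ((d - 1 : ℝ) / d)) ↔
      ∃ z : ℂ, ‖z‖ = 1 ∧ e =ᵐ[sphereMeasure d] fun ξ => WithLp.toLp 2 fun j =>
        z / (Real.sqrt ((sphereMeasure d Set.univ).toReal * ((d - 1 : ℝ) / d)) : ℂ) *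
          ((ℓ (ξ : EuclideanSpace ℝ (Fin d)) j : ℝ) : ℂ)) := by
  classical
  have hd0 : 0 < d := by omega
  set i0 : Fin d := ⟨0, hd0⟩ with hi0
  have hℓ' : ∀ ξ : ES d, ℓ ξ = EuclideanSpace.single i0 (1 : ℝ) - ξ i0 • ξ := hℓ
  set T : ℝ := ((sphereMeasure d) Set.univ).toReal with hT
  have hTpos : 0 < T := by
    rw [hT]; unfold sphereMeasure
    rw [Measure.toSphere_apply_univ]
    have h1 : (0 : ENNReal) < volume (ball (0 : ES d) 1) :=
      measure_ball_pos volume (0 : ES d) one_pos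
    have hdim : (Module.finrank ℝ (ES d)) = d := by simp
    rw [ENNReal.toReal_pos_iff]
    exact ⟨ENNReal.mul_pos (by simp [hdim]; omega) h1.ne',
      ENNReal.mul_lt_top (ENNReal.natCast_lt_top _) measure_ball_lt_top⟩
  have hdR : (0:ℝ) < d := by exact_mod_cast hd0
  have h2R : (2:ℝ) ≤ d := by exact_mod_cast hd
  have hfrac : 0 < (d - 1 : ℝ) / d := div_pos (by linarith) hdR
  set c : ℝ := Real.sqrt (T * ((d - 1 : ℝ) / d)) with hc
  have hcpos : 0 < c := Real.sqrt_pos.mpr (mul_pos hTpos hfrac)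
  have hc2 : c ^ 2 = T * ((d - 1 : ℝ) / d) :=
    Real.sq_sqrt (le_of_lt (mul_pos hTpos hfrac))
  set L : sphere (0 : ES d) 1 → EuclideanSpace ℂ (Fin d) :=
    fun ξ => WithLp.toLp 2 fun j => ((ℓ (ξ : ES d) j : ℝ) : ℂ) with hLdef
  have hℓcoord : ∀ (j : Fin d) (ξ : sphere (0 : ES d) 1),
      ℓ (ξ : ES d) j = (if j = i0 then (1:ℝ) else 0) - (ξ : ES d) i0 * (ξ : ES d) j := by
    intro j ξ
    rw [hℓ']
    simp [EuclideanSpace.single_apply]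
  have hcoordℓ : ∀ j, Continuous fun ξ : sphere (0 : ES d) 1 => ℓ (ξ : ES d) j := by
    intro j
    have h1 : (fun ξ : sphere (0 : ES d) 1 => ℓ (ξ : ES d) j)
        = fun ξ : sphere (0 : ES d) 1 =>
          (if j = i0 then (1:ℝ) else 0) - (ξ : ES d) i0 * (ξ : ES d) j := by
      funext ξ; exact hℓcoord j ξ
    rw [h1]
    exact continuous_const.sub ((coord_continuous i0).mul (coord_continuous j))
  have hLcont : Continuous L :=
    (PiLp.continuous_toLp 2 (fun _ : Fin d => ℂ)).comp
      (continuous_pi fun j => Complex.continuous_ofReal.comp (hcoordℓ j))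
  have hL2 : MemLp L 2 (sphereMeasure d) := cont_memℒp hLcont
  have heInt : Integrable e (sphereMeasure d) := he.integrable one_le_two
  -- pointwise identity from tangentiality
  have hpt : ∀ ξ : sphere (0 : ES d) 1, (∑ j, ((ξ : ES d) j : ℂ) * e ξ j = 0) →
      ∑ j, e ξ j * ((ℓ (ξ : ES d) j : ℝ) : ℂ) = e ξ i0 := by
    intro ξ h
    have hval : ∀ j, ((ℓ (ξ : ES d) j : ℝ) : ℂ)
        = (if j = i0 then 1 else 0) - ((ξ : ES d) i0 : ℂ) * ((ξ : ES d) j : ℂ) := by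
      intro j
      rw [hℓcoord j ξ]
      push_cast
      split <;> push_cast <;> ring
    calc ∑ j, e ξ j * ((ℓ (ξ : ES d) j : ℝ) : ℂ)
        = ∑ j, (e ξ j * (if j = i0 then 1 else 0)
            - ((ξ : ES d) i0 : ℂ) * (((ξ : ES d) j : ℂ) * e ξ j)) := by
          refine Finset.sum_congr rfl fun j _ => ?_; rw [hval]; ring
      _ = e ξ i0 - ((ξ : ES d) i0 : ℂ) * ∑ j, ((ξ : ES d) j : ℂ) * e ξ j := by
          rw [Finset.sum_sub_distrib, ← Finset.mul_sum]
          congr 1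
          simp
      _ = e ξ i0 := by rw [h]; ring
  have hQ1 : (∫ ξ, e ξ ∂(sphereMeasure d)) i0 = ∫ ξ, e ξ i0 ∂(sphereMeasure d) := by
    have h := (EuclideanSpace.proj (𝕜 := ℂ) i0).integral_comp_comm heInt
    simpa using h.symm
  have hA : (∫ ξ, e ξ ∂(sphereMeasure d)) i0
      = ∫ ξ, ∑ j, e ξ j * ((ℓ (ξ : ES d) j : ℝ) : ℂ) ∂(sphereMeasure d) := by
    rw [hQ1]
    refine (integral_congr_ae ?_).symm
    filter_upwards [htang] with ξ h using hpt ξ h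
  -- inner products in L²
  have hinnerLe : ∀ ξ : sphere (0 : ES d) 1,
      (inner ℂ (L ξ) (e ξ) : ℂ) = ∑ j, e ξ j * ((ℓ (ξ : ES d) j : ℝ) : ℂ) := by
    intro ξ
    rw [PiLp.inner_apply]
    refine Finset.sum_congr rfl fun j _ => ?_
    simp [hLdef, RCLike.inner_apply, Complex.conj_ofReal, mul_comm]
  set E2 : Lp (EuclideanSpace ℂ (Fin d)) 2 (sphereMeasure d) := he.toLp e with hE2def
  set L2 : Lp (EuclideanSpace ℂ (Fin d)) 2 (sphereMeasure d) := hL2.toLp L with hL2def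
  have hinner : (inner ℂ L2 E2 : ℂ)
      = ∫ ξ, ∑ j, e ξ j * ((ℓ (ξ : ES d) j : ℝ) : ℂ) ∂(sphereMeasure d) := by
    rw [MeasureTheory.L2.inner_def]
    refine integral_congr_ae ?_
    filter_upwards [he.coeFn_toLp, hL2.coeFn_toLp] with ξ h1 h2
    rw [hE2def, hL2def, h1, h2]
    exact hinnerLe ξ
  have hE2norm : ‖E2‖ = 1 := by
    have hInt : (inner ℂ E2 E2 : ℂ) = ((∫ ξ, ‖e ξ‖ ^ 2 ∂(sphereMeasure d) : ℝ) : ℂ) := by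
      have key : ∫ ξ, ((‖e ξ‖ ^ 2 : ℝ) : ℂ) ∂(sphereMeasure d)
          = ((∫ ξ, ‖e ξ‖ ^ 2 ∂(sphereMeasure d) : ℝ) : ℂ) := integral_ofReal
      rw [MeasureTheory.L2.inner_def, ← key]
      refine integral_congr_ae ?_
      filter_upwards [he.coeFn_toLp] with ξ h1
      rw [hE2def, h1, inner_self_eq_norm_sq_to_K]
      norm_cast
    rw [hnorm] at hInt
    have h2 : ‖E2‖ ^ 2 = 1 := by
      have hx : ((‖E2‖ ^ 2 : ℝ) : ℂ) = ((1:ℝ) : ℂ) := by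
        rw [← hInt, inner_self_eq_norm_sq_to_K]; norm_cast
      exact_mod_cast hx
    nlinarith [norm_nonneg E2]
  -- ∫ ‖L‖²
  have hLnormℝ : ∀ ξ : sphere (0 : ES d) 1, ‖L ξ‖ = ‖ℓ (ξ : ES d)‖ := by
    intro ξ
    rw [EuclideanSpace.norm_eq, EuclideanSpace.norm_eq]
    congr 1
    refine Finset.sum_congr rfl fun j _ => ?_
    simp [hLdef]
  have hℓnormsq : ∀ ξ : sphere (0 : ES d) 1, ‖ℓ (ξ : ES d)‖ ^ 2 = 1 - ((ξ : ES d) i0) ^ 2 := by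
    intro ξ
    have hξ : ‖(ξ : ES d)‖ = 1 := by simpa using mem_sphere_zero_iff_norm.mp ξ.2
    rw [hℓ', norm_sub_sq_real, real_inner_smul_right, EuclideanSpace.inner_single_left]
    simp only [norm_smul, EuclideanSpace.norm_single, conj_trivial, hξ, norm_one]
    rw [Real.norm_eq_abs]
    rw [mul_pow, sq_abs]
    ring
  have hLint : ∫ ξ, ‖L ξ‖ ^ 2 ∂(sphereMeasure d) = T * ((d - 1 : ℝ) / d) := by
    have h1 : ∫ ξ, ‖L ξ‖ ^ 2 ∂(sphereMeasure d)
        = ∫ ξ, (1 - ((ξ : ES d) i0) ^ 2) ∂(sphereMeasure d) := by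
      refine integral_congr_ae (Filter.Eventually.of_forall fun ξ => ?_)
      dsimp only
      rw [hLnormℝ ξ, hℓnormsq ξ]
    rw [h1, integral_sub (integrable_const 1)
      (cont_integrable (f := fun ξ : sphere (0 : ES d) 1 => ((ξ : ES d) i0) ^ 2) ((coord_continuous i0).pow 2)), integral_coord_sq hd0 i0,
      integral_const]
    rw [← hT]
    simp only [smul_eq_mul, mul_one, show (sphereMeasure d).real Set.univ = T from rfl]
    field_simp
  have hL2norm : ‖L2‖ = c := by
    have hInt : (inner ℂ L2 L2 : ℂ) = ((∫ ξ, ‖L ξ‖ ^ 2 ∂(sphereMeasure d) : ℝ) : ℂ) := by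
      have key : ∫ ξ, ((‖L ξ‖ ^ 2 : ℝ) : ℂ) ∂(sphereMeasure d)
          = ((∫ ξ, ‖L ξ‖ ^ 2 ∂(sphereMeasure d) : ℝ) : ℂ) := integral_ofReal
      rw [MeasureTheory.L2.inner_def, ← key]
      refine integral_congr_ae ?_
      filter_upwards [hL2.coeFn_toLp] with ξ h1
      rw [hL2def, h1, inner_self_eq_norm_sq_to_K]
      norm_cast
    rw [hLint] at hInt
    have h2 : ‖L2‖ ^ 2 = T * ((d - 1 : ℝ) / d) := by
      have hx : ((‖L2‖ ^ 2 : ℝ) : ℂ) = ((T * ((d - 1 : ℝ) / d) : ℝ) : ℂ) := by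
        rw [← hInt, inner_self_eq_norm_sq_to_K]; norm_cast
      exact_mod_cast hx
    rw [← hc2] at h2
    nlinarith [norm_nonneg L2, hcpos]
  have hB : ‖(∫ ξ, e ξ ∂(sphereMeasure d)) i0‖ ≤ c := by
    rw [hA, ← hinner]
    calc ‖(inner ℂ L2 E2 : ℂ)‖ ≤ ‖L2‖ * ‖E2‖ := norm_inner_le_norm L2 E2
      _ = c := by rw [hE2norm, hL2norm, mul_one]
  have hsmul_eq : ∀ (r : ℂ), (e =ᵐ[sphereMeasure d] (r • L)) ↔ E2 = r • L2 := by
    intro r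
    constructor
    · intro h
      rw [hE2def, hL2def, ← MemLp.toLp_const_smul r hL2]
      exact (MemLp.toLp_eq_toLp_iff he (hL2.const_smul r)).mpr h
    · intro h
      rw [hE2def, hL2def, ← MemLp.toLp_const_smul r hL2] at h
      exact (MemLp.toLp_eq_toLp_iff he (hL2.const_smul r)).mp h
  have hcC : ((c : ℝ) : ℂ) ≠ 0 := by
    simpa using hcpos.ne'
  have hCfwd : ‖(∫ ξ, e ξ ∂(sphereMeasure d)) i0‖ = c →
      ∃ z : ℂ, ‖z‖ = 1 ∧ e =ᵐ[sphereMeasure d] fun ξ => WithLp.toLp 2 fun j =>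
        z / ((c : ℝ) : ℂ) * ((ℓ (ξ : ES d) j : ℝ) : ℂ) := by
    intro hEq
    have hEq' : ‖(inner ℂ L2 E2 : ℂ)‖ = ‖L2‖ * ‖E2‖ := by
      rw [hE2norm, hL2norm, mul_one, hinner, ← hA]
      exact hEq
    have hL2ne : L2 ≠ 0 := by
      intro h0
      rw [h0, norm_zero] at hL2norm
      exact hcpos.ne hL2norm
    have hE2ne : E2 ≠ 0 := by
      intro h0
      rw [h0, norm_zero] at hE2norm
      norm_num at hE2norm
    obtain ⟨r, hr0, hrE⟩ := (norm_inner_eq_norm_iff hL2ne hE2ne).mp hEq'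
    have hrnorm : ‖r‖ * c = 1 := by
      have h3 : ‖E2‖ = ‖r‖ * ‖L2‖ := by rw [hrE, norm_smul]
      rw [hE2norm, hL2norm] at h3
      exact h3.symm
    refine ⟨r * ((c : ℝ) : ℂ), ?_, ?_⟩
    · rw [norm_mul, Complex.norm_real, Real.norm_eq_abs, abs_of_pos hcpos]
      exact hrnorm
    · have hae : e =ᵐ[sphereMeasure d] (r • L) := (hsmul_eq r).mpr hrE
      refine hae.mono fun ξ hξ => ?_
      rw [hξ]
      ext j
      show r * L ξ j = r * ((c : ℝ) : ℂ) / ((c : ℝ) : ℂ) * L ξ j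
      congr 1
      field_simp
  have hCbwd : (∃ z : ℂ, ‖z‖ = 1 ∧ e =ᵐ[sphereMeasure d] fun ξ => WithLp.toLp 2 fun j =>
        z / ((c : ℝ) : ℂ) * ((ℓ (ξ : ES d) j : ℝ) : ℂ)) →
      ‖(∫ ξ, e ξ ∂(sphereMeasure d)) i0‖ = c := by
    rintro ⟨z, hz, hae⟩
    have hae' : e =ᵐ[sphereMeasure d] ((z / ((c : ℝ) : ℂ)) • L) := by
      refine hae.mono fun ξ hξ => ?_
      rw [hξ]
      ext j
      show z / ((c : ℝ) : ℂ) * L ξ j = z / ((c : ℝ) : ℂ) * L ξ j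
      rfl
    have hE2eq : E2 = (z / ((c : ℝ) : ℂ)) • L2 := (hsmul_eq _).mp hae'
    have h4 : (inner ℂ L2 E2 : ℂ) = (z / ((c : ℝ) : ℂ)) * (inner ℂ L2 L2 : ℂ) := by
      rw [hE2eq, inner_smul_right]
    have hx := inner_self_eq_norm_sq_to_K (𝕜 := ℂ) (x := L2)
    rw [hx, hL2norm] at h4
    rw [hA, ← hinner, h4, norm_mul, norm_div, hz, Complex.norm_real, norm_pow,
      RCLike.norm_ofReal, Real.norm_eq_abs, abs_of_pos hcpos]
    field_simp [sq]
  exact ⟨hA, hB, hCfwd, hCbwd⟩
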